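/- Fix a < L and v < 0, and let g(s) = (L²+a²)s − |v| − La√(s(4s+1)) for s > 0. Then g has a unique positive zero, namely s₊ = [2|v|(L²+a²) + L²a²]/(2(L²−a²)²) + (1/(L²−a²))·√( (2|v|(L²+a²)+L²a²)²/(4(L²−a²)²) − |v|² ), and g < 0 on (0,s₊), g > 0 on (s₊,∞). -/

import Mathlib

open Real

private lemma quad_neg_aux {A q : ℝ} (hA : 0 < A) (h : 4 * A * q < 0) : q < 0 := by
  nlinarith

private lemma quad_pos_aux {A q : ℝ} (hA : 0 < A) (h : 0 < 4 * A * q) : 0 < q := by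
  nlinarith

set_option maxHeartbeats 1000000 in
/-- the function `g(s) = (L²+a²)s - |v| - La√(s(4s+1))` has a unique
positive zero `s₊`, is negative on `(0,s₊)` and positive on `(s₊,∞)`. -/
theorem stmt16 (a L v : ℝ) (ha : 0 < a) (haL : a < L) (hv : v < 0)
    (g : ℝ → ℝ)
    (hg : ∀ s, g s = (L ^ 2 + a ^ 2) * s - |v| - L * a * Real.sqrt (s * (4 * s + 1)))
    (sp : ℝ)
    (hsp : sp = (2 * |v| * (L ^ 2 + a ^ 2) + L ^ 2 * a ^ 2) / (2 * (L ^ 2 - a ^ 2) ^ 2) +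
      (1 / (L ^ 2 - a ^ 2)) * Real.sqrt
        ((2 * |v| * (L ^ 2 + a ^ 2) + L ^ 2 * a ^ 2) ^ 2 / (4 * (L ^ 2 - a ^ 2) ^ 2)
          - |v| ^ 2)) :
    g sp = 0 ∧ (∀ s ∈ Set.Ioo (0:ℝ) sp, g s < 0) ∧ (∀ s > sp, 0 < g s) := by
  have hL : 0 < L := ha.trans haL
  have hV0 : 0 < |v| := abs_pos.mpr hv.ne
  set V := |v| with hVd
  have hM : 0 < L ^ 2 - a ^ 2 := by nlinarith
  have hP : 0 < L ^ 2 + a ^ 2 := by positivity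
  have hApos : 0 < (L ^ 2 - a ^ 2) ^ 2 := by positivity
  have hDpos : 0 < (2 * V * (L ^ 2 + a ^ 2) + L ^ 2 * a ^ 2) ^ 2
      - 4 * (L ^ 2 - a ^ 2) ^ 2 * V ^ 2 := by
    have key : (2 * V * (L ^ 2 + a ^ 2) + L ^ 2 * a ^ 2) ^ 2
        - 4 * (L ^ 2 - a ^ 2) ^ 2 * V ^ 2
        = L ^ 2 * a ^ 2 * (16 * V ^ 2 + 4 * V * (L ^ 2 + a ^ 2) + L ^ 2 * a ^ 2) := by
      ring
    rw [key]
    have h1 : 0 < 16 * V ^ 2 + 4 * V * (L ^ 2 + a ^ 2) + L ^ 2 * a ^ 2 := by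
      nlinarith [mul_pos hV0 hP, sq_nonneg V]
    exact mul_pos (mul_pos (pow_pos hL 2) (pow_pos ha 2)) h1
  set R := Real.sqrt ((2 * V * (L ^ 2 + a ^ 2) + L ^ 2 * a ^ 2) ^ 2
      - 4 * (L ^ 2 - a ^ 2) ^ 2 * V ^ 2) with hRd
  have hRpos : 0 < R := Real.sqrt_pos.mpr hDpos
  have hRsq : R ^ 2 = (2 * V * (L ^ 2 + a ^ 2) + L ^ 2 * a ^ 2) ^ 2
      - 4 * (L ^ 2 - a ^ 2) ^ 2 * V ^ 2 := Real.sq_sqrt hDpos.le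
  -- a clean formula for sp
  have hspe : 2 * (L ^ 2 - a ^ 2) ^ 2 * sp
      = (2 * V * (L ^ 2 + a ^ 2) + L ^ 2 * a ^ 2) + R := by
    have e1 : (2 * V * (L ^ 2 + a ^ 2) + L ^ 2 * a ^ 2) ^ 2 / (4 * (L ^ 2 - a ^ 2) ^ 2)
        - V ^ 2 = (R / (2 * (L ^ 2 - a ^ 2))) ^ 2 := by
      rw [div_pow, hRsq]
      field_simp
      ring
    rw [hsp, e1, Real.sqrt_sq (div_nonneg hRpos.le (by positivity))]
    field_simp
  -- sp satisfies the quadratic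
  have hfact1 : (L ^ 2 - a ^ 2) ^ 2 * sp ^ 2
      - (2 * V * (L ^ 2 + a ^ 2) + L ^ 2 * a ^ 2) * sp + V ^ 2 = 0 := by
    have h4 : (2 * (L ^ 2 - a ^ 2) ^ 2 * sp - (2 * V * (L ^ 2 + a ^ 2) + L ^ 2 * a ^ 2)) ^ 2
        = (2 * V * (L ^ 2 + a ^ 2) + L ^ 2 * a ^ 2) ^ 2
          - 4 * (L ^ 2 - a ^ 2) ^ 2 * V ^ 2 := by
      rw [hspe, ← hRsq]; ring
    have h5 : 4 * (L ^ 2 - a ^ 2) ^ 2 * ((L ^ 2 - a ^ 2) ^ 2 * sp ^ 2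
        - (2 * V * (L ^ 2 + a ^ 2) + L ^ 2 * a ^ 2) * sp + V ^ 2) = 0 := by
      linear_combination h4
    exact (mul_eq_zero.mp h5).resolve_left (by positivity)
  -- the point s0 = V/(L²+a²) is strictly between the roots
  have hs0pos : 0 < V / (L ^ 2 + a ^ 2) := div_pos hV0 hP
  have hz : (L ^ 2 + a ^ 2) * (V / (L ^ 2 + a ^ 2)) = V := by field_simp
  have hq0 : (L ^ 2 - a ^ 2) ^ 2 * (V / (L ^ 2 + a ^ 2)) ^ 2
      - (2 * V * (L ^ 2 + a ^ 2) + L ^ 2 * a ^ 2) * (V / (L ^ 2 + a ^ 2)) + V ^ 2 < 0 := by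
    have hid : (L ^ 2 - a ^ 2) ^ 2 * (V / (L ^ 2 + a ^ 2)) ^ 2
        - (2 * V * (L ^ 2 + a ^ 2) + L ^ 2 * a ^ 2) * (V / (L ^ 2 + a ^ 2)) + V ^ 2
        = ((L ^ 2 + a ^ 2) * (V / (L ^ 2 + a ^ 2)) - V) ^ 2
          - L ^ 2 * a ^ 2 * ((V / (L ^ 2 + a ^ 2)) * (4 * (V / (L ^ 2 + a ^ 2)) + 1)) := by
      ring
    rw [hid, hz, sub_self]
    have : 0 < L ^ 2 * a ^ 2 * ((V / (L ^ 2 + a ^ 2)) * (4 * (V / (L ^ 2 + a ^ 2)) + 1)) := by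
      have := hs0pos
      positivity
    nlinarith [this]
  have hIdent : ∀ s : ℝ, (2 * (L ^ 2 - a ^ 2) ^ 2 * s
      - (2 * V * (L ^ 2 + a ^ 2) + L ^ 2 * a ^ 2)) ^ 2
      - ((2 * V * (L ^ 2 + a ^ 2) + L ^ 2 * a ^ 2) ^ 2 - 4 * (L ^ 2 - a ^ 2) ^ 2 * V ^ 2)
      = 4 * (L ^ 2 - a ^ 2) ^ 2 * ((L ^ 2 - a ^ 2) ^ 2 * s ^ 2
        - (2 * V * (L ^ 2 + a ^ 2) + L ^ 2 * a ^ 2) * s + V ^ 2) := by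
    intro s; ring
  have hq0' : (2 * (L ^ 2 - a ^ 2) ^ 2 * (V / (L ^ 2 + a ^ 2))
      - (2 * V * (L ^ 2 + a ^ 2) + L ^ 2 * a ^ 2)) ^ 2 < R ^ 2 := by
    rw [hRsq]
    have h6 := mul_pos hApos (show 0 < -((L ^ 2 - a ^ 2) ^ 2 * (V / (L ^ 2 + a ^ 2)) ^ 2
      - (2 * V * (L ^ 2 + a ^ 2) + L ^ 2 * a ^ 2) * (V / (L ^ 2 + a ^ 2)) + V ^ 2) from by linarith)
    linarith [hIdent (V / (L ^ 2 + a ^ 2)), h6]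
  have hs0ub : 2 * (L ^ 2 - a ^ 2) ^ 2 * (V / (L ^ 2 + a ^ 2))
      - (2 * V * (L ^ 2 + a ^ 2) + L ^ 2 * a ^ 2) < R :=
    lt_of_pow_lt_pow_left₀ 2 hRpos.le hq0'
  have hs0lb : -R < 2 * (L ^ 2 - a ^ 2) ^ 2 * (V / (L ^ 2 + a ^ 2))
      - (2 * V * (L ^ 2 + a ^ 2) + L ^ 2 * a ^ 2) := by
    have h2 : -(2 * (L ^ 2 - a ^ 2) ^ 2 * (V / (L ^ 2 + a ^ 2))
        - (2 * V * (L ^ 2 + a ^ 2) + L ^ 2 * a ^ 2)) < R := by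
      apply lt_of_pow_lt_pow_left₀ 2 hRpos.le
      calc (-(2 * (L ^ 2 - a ^ 2) ^ 2 * (V / (L ^ 2 + a ^ 2))
          - (2 * V * (L ^ 2 + a ^ 2) + L ^ 2 * a ^ 2))) ^ 2
          = (2 * (L ^ 2 - a ^ 2) ^ 2 * (V / (L ^ 2 + a ^ 2))
            - (2 * V * (L ^ 2 + a ^ 2) + L ^ 2 * a ^ 2)) ^ 2 := by ring
        _ < R ^ 2 := hq0'
    linarith
  have hs0sp : V / (L ^ 2 + a ^ 2) < sp := by
    refine lt_of_mul_lt_mul_left ?_ hApos.le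
    linarith [hs0ub, hspe]
  have hsppos : 0 < sp := hs0pos.trans hs0sp
  have hXpos : 0 < (L ^ 2 + a ^ 2) * sp - V := by
    linarith [mul_pos hP (sub_pos.mpr hs0sp), hz]
  have hLa : 0 < L * a := mul_pos hL ha
  -- g sp = 0
  have hXsq : ((L ^ 2 + a ^ 2) * sp - V) ^ 2 = L ^ 2 * a ^ 2 * (sp * (4 * sp + 1)) := by
    linear_combination hfact1
  have hsqrt : L * a * Real.sqrt (sp * (4 * sp + 1)) = (L ^ 2 + a ^ 2) * sp - V := by
    have h1 : sp * (4 * sp + 1) = (((L ^ 2 + a ^ 2) * sp - V) / (L * a)) ^ 2 := by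
      rw [div_pow, hXsq]
      field_simp
    rw [h1, Real.sqrt_sq (div_nonneg hXpos.le hLa.le)]
    field_simp
  have hgsp : g sp = 0 := by rw [hg, hsqrt]; ring
  refine ⟨hgsp, ?_, ?_⟩
  · rintro s ⟨hs0, hssp⟩
    rw [hg]
    have hspos : 0 < s * (4 * s + 1) := by nlinarith
    have hYpos : 0 < Real.sqrt (s * (4 * s + 1)) := Real.sqrt_pos.mpr hspos
    have hYsq : (Real.sqrt (s * (4 * s + 1))) ^ 2 = s * (4 * s + 1) :=
      Real.sq_sqrt hspos.le
    rcases le_or_gt ((L ^ 2 + a ^ 2) * s) V with h | h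
    · linarith [mul_pos hLa hYpos]
    · -- s0 < s < sp
      have hss0 : V / (L ^ 2 + a ^ 2) < s := by
        rw [div_lt_iff₀ hP]
        linarith
      have hub : 2 * (L ^ 2 - a ^ 2) ^ 2 * s
          - (2 * V * (L ^ 2 + a ^ 2) + L ^ 2 * a ^ 2) < R := by
        linarith [mul_pos hApos (sub_pos.mpr hssp), hspe]
      have hlb : -R < 2 * (L ^ 2 - a ^ 2) ^ 2 * s
          - (2 * V * (L ^ 2 + a ^ 2) + L ^ 2 * a ^ 2) := by
        linarith [mul_pos hApos (sub_pos.mpr hss0), hs0lb]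
      have hsqlt : (2 * (L ^ 2 - a ^ 2) ^ 2 * s
          - (2 * V * (L ^ 2 + a ^ 2) + L ^ 2 * a ^ 2)) ^ 2 < R ^ 2 := by
        linarith [mul_pos (sub_pos.mpr hub) (show 0 < R + (2 * (L ^ 2 - a ^ 2) ^ 2 * s
          - (2 * V * (L ^ 2 + a ^ 2) + L ^ 2 * a ^ 2)) from by linarith)]
      rw [hRsq] at hsqlt
      have hquadneg : (L ^ 2 - a ^ 2) ^ 2 * s ^ 2
          - (2 * V * (L ^ 2 + a ^ 2) + L ^ 2 * a ^ 2) * s + V ^ 2 < 0 := by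
        refine quad_neg_aux hApos ?_
        linarith [hsqlt, hIdent s]
      have hX2 : ((L ^ 2 + a ^ 2) * s - V) ^ 2
          < (L * a * Real.sqrt (s * (4 * s + 1))) ^ 2 := by
        have he : (L * a * Real.sqrt (s * (4 * s + 1))) ^ 2
            = L ^ 2 * a ^ 2 * (s * (4 * s + 1)) := by
          rw [mul_pow, hYsq]; ring
        rw [he]
        linarith [hquadneg]
      have := lt_of_pow_lt_pow_left₀ 2 (by positivity) hX2
      linarith
  · intro s hssp
    rw [hg]
    have hs0 : 0 < s := hsppos.trans hssp
    have hspos : 0 < s * (4 * s + 1) := by nlinarith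
    have hYpos : 0 < Real.sqrt (s * (4 * s + 1)) := Real.sqrt_pos.mpr hspos
    have hYsq : (Real.sqrt (s * (4 * s + 1))) ^ 2 = s * (4 * s + 1) :=
      Real.sq_sqrt hspos.le
    have hXpos' : 0 < (L ^ 2 + a ^ 2) * s - V := by
      linarith [mul_pos hP (sub_pos.mpr hssp), hXpos]
    have hgt : R < 2 * (L ^ 2 - a ^ 2) ^ 2 * s
        - (2 * V * (L ^ 2 + a ^ 2) + L ^ 2 * a ^ 2) := by
      linarith [mul_pos hApos (sub_pos.mpr hssp), hspe]
    have hsq2 : R ^ 2 < (2 * (L ^ 2 - a ^ 2) ^ 2 * s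
        - (2 * V * (L ^ 2 + a ^ 2) + L ^ 2 * a ^ 2)) ^ 2 := by
      linarith [mul_pos (sub_pos.mpr hgt) (show 0 < (2 * (L ^ 2 - a ^ 2) ^ 2 * s
        - (2 * V * (L ^ 2 + a ^ 2) + L ^ 2 * a ^ 2)) + R from by linarith)]
    rw [hRsq] at hsq2
    have hquadpos : 0 < (L ^ 2 - a ^ 2) ^ 2 * s ^ 2
        - (2 * V * (L ^ 2 + a ^ 2) + L ^ 2 * a ^ 2) * s + V ^ 2 := by
      refine quad_pos_aux hApos ?_
      linarith [hsq2, hIdent s]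
    have hY2 : (L * a * Real.sqrt (s * (4 * s + 1))) ^ 2
        < ((L ^ 2 + a ^ 2) * s - V) ^ 2 := by
      have he : (L * a * Real.sqrt (s * (4 * s + 1))) ^ 2
          = L ^ 2 * a ^ 2 * (s * (4 * s + 1)) := by
        rw [mul_pow, hYsq]; ring
      rw [he]
      linarith [hquadpos]
    have := lt_of_pow_lt_pow_left₀ 2 hXpos'.le hY2
    linarith
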